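/- Let A, Σ, P be real m×m matrices with Σ and P symmetric positive definite, and set S = Σ⁻¹ A and Λ = Σ⁻¹. If the block matrix [[P, Sᵀ], [S, 2Λ − P]] is positive definite, then Aᵀ P A − P is negative definite, i.e., the Lyapunov inequality Aᵀ P A ≺ P holds. -/

import Mathlib

open Matrix

theorem stmt_2 {m : ℕ} (A Sig P : Matrix (Fin m) (Fin m) ℝ)
    (hSig : Sig.PosDef) (hP : P.PosDef)
    (S : Matrix (Fin m) (Fin m) ℝ) (hS : S = Sig⁻¹ * A)
    (Λ : Matrix (Fin m) (Fin m) ℝ) (hΛ : Λ = Sig⁻¹)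
    (hblock : (Matrix.fromBlocks P Sᵀ S (2 • Λ - P)).PosDef) :
    (P - Aᵀ * P * A).PosDef := by
  subst hS hΛ
  have hdS : IsUnit Sig.det := hSig.det_pos.ne'.isUnit
  have hdP : IsUnit P.det := hP.det_pos.ne'.isUnit
  have hPt : Pᵀ = P := hP.1
  have hSt : Sigᵀ = Sig := hSig.1
  have hSit : (Sig⁻¹)ᵀ = Sig⁻¹ := by rw [transpose_nonsing_inv, hSt]
  have hPit : (P⁻¹)ᵀ = P⁻¹ := by rw [transpose_nonsing_inv, hPt]
  -- abbreviations
  set N : Matrix (Fin m) (Fin m) ℝ := Sig * P * A with hN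
  set K : Matrix (Fin m) (Fin m) ℝ := P⁻¹ - Sig with hK
  have hKt : Kᵀ = K := by rw [hK, transpose_sub, hPit, hSt]
  -- inner identity
  have hinner : Sig * (2 • Sig⁻¹ - P) * Sig + K * P * K = P⁻¹ := by
    rw [hK]
    simp only [Matrix.mul_sub, Matrix.sub_mul, Matrix.mul_smul, Matrix.smul_mul,
      Matrix.mul_assoc, Matrix.mul_nonsing_inv_cancel_left _ _ hdS,
      Matrix.nonsing_inv_mul_cancel_left _ _ hdP,
      Matrix.mul_nonsing_inv _ hdP, Matrix.mul_one]
    abel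
  -- key matrix identity
  have hmat : (P - (Sig⁻¹ * A)ᵀ * N - Nᵀ * (Sig⁻¹ * A) + Nᵀ * (2 • Sig⁻¹ - P) * N)
      + (P * A)ᵀ * (K * P * K) * (P * A) = P - Aᵀ * P * A := by
    have e1 : (Sig⁻¹ * A)ᵀ * N = Aᵀ * P * A := by
      rw [hN, transpose_mul, hSit, Matrix.mul_assoc, Matrix.mul_assoc Sig,
        Matrix.nonsing_inv_mul_cancel_left _ _ hdS, ← Matrix.mul_assoc]
    have e2 : Nᵀ * (Sig⁻¹ * A) = Aᵀ * P * A := by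
      rw [hN, transpose_mul, transpose_mul, hSt, hPt, Matrix.mul_assoc,
        Matrix.mul_assoc P, Matrix.mul_nonsing_inv_cancel_left _ _ hdS,
        ← Matrix.mul_assoc]
    have e3 : Nᵀ * (2 • Sig⁻¹ - P) * N + (P * A)ᵀ * (K * P * K) * (P * A)
        = Aᵀ * P * A := by
      have hNt : Nᵀ = Aᵀ * P * Sig := by
        rw [hN, transpose_mul, transpose_mul, hSt, hPt, Matrix.mul_assoc]
      have hPAt : (P * A)ᵀ = Aᵀ * P := by rw [transpose_mul, hPt]
      rw [hNt, hPAt, hN]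
      calc Aᵀ * P * Sig * (2 • Sig⁻¹ - P) * (Sig * P * A)
            + Aᵀ * P * (K * P * K) * (P * A)
          = Aᵀ * P * (Sig * (2 • Sig⁻¹ - P) * Sig + K * P * K) * (P * A) := by
            simp only [Matrix.mul_add, Matrix.add_mul, Matrix.mul_assoc]
        _ = Aᵀ * P * P⁻¹ * (P * A) := by rw [hinner, ← Matrix.mul_assoc]
        _ = Aᵀ * P * A := by
            simp only [Matrix.mul_assoc, Matrix.nonsing_inv_mul_cancel_left _ _ hdP]
    rw [e1, e2, add_assoc, e3]
    abel
  have dp : ∀ (M M' : Matrix (Fin m) (Fin m) ℝ) (a b : Fin m → ℝ),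
      (M *ᵥ a) ⬝ᵥ (M' *ᵥ b) = a ⬝ᵥ ((Mᵀ * M') *ᵥ b) := by
    intro M M' a b
    rw [dotProduct_comm, dotProduct_mulVec, dotProduct_comm, ← mulVec_mulVec, mulVec_transpose]
  have hherm : (P - Aᵀ * P * A).IsHermitian := by
    have h1 : (Aᵀ * P * A).IsHermitian := by
      rw [← conjTranspose_eq_transpose_of_trivial A]
      exact isHermitian_conjTranspose_mul_mul A hP.1
    exact hP.1.sub h1
  refine posDef_iff_dotProduct_mulVec.mpr ⟨hherm, fun x hx => ?_⟩
  set v : Fin m → ℝ := -(N *ᵥ x) with hv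
  set w : Fin m → ℝ := (P * A) *ᵥ x with hw
  have hxv : (x ⊕ᵥ v) ≠ 0 := by
    intro h
    apply hx
    funext i
    exact congrFun h (Sum.inl i)
  have hb := hblock.dotProduct_mulVec_pos hxv
  have hpsd := (hP.posSemidef.conjTranspose_mul_mul_same K).dotProduct_mulVec_nonneg w
  rw [conjTranspose_eq_transpose_of_trivial, hKt] at hpsd
  have key : x ⬝ᵥ ((P - Aᵀ * P * A) *ᵥ x)
      = (x ⊕ᵥ v) ⬝ᵥ ((fromBlocks P (Sig⁻¹ * A)ᵀ (Sig⁻¹ * A) (2 • Sig⁻¹ - P)) *ᵥ (x ⊕ᵥ v))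
        + w ⬝ᵥ ((K * P * K) *ᵥ w) := by
    rw [fromBlocks_mulVec, sumElim_dotProduct_sumElim, ← hmat]
    simp only [hv, hw, mulVec_neg, dotProduct_neg, neg_dotProduct, mulVec_mulVec,
      dotProduct_add, dotProduct_sub, Matrix.sub_mulVec, Matrix.add_mulVec,
      Matrix.mul_assoc, dp, neg_neg, Sum.elim_comp_inl, Sum.elim_comp_inr]
    ring
  simp only [star_trivial] at hb hpsd ⊢
  rw [key]
  exact add_pos_of_pos_of_nonneg hb hpsd
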